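/- Abstract form of Proposition 3 (quantization of the hyperkähler order-4 bracket): suppose f ↦ T_f^{(k)} is a linear map from smooth functions on a compact manifold to operators on finite-dimensional Hilbert spaces satisfying ‖ik[T_f^{(k)},T_g^{(k)}] − T_{{f,g}}^{(k)}‖ = O(1/k), ‖T_f^{(k)}‖ ≤ |f|_∞, and ‖T_f^{(k)}T_g^{(k)} − T_{fg}^{(k)}‖ = O(1/k). Define {f,g,h,t} = {f,g}{h,t} − {f,h}{g,t} + {f,t}{g,h}. Then ‖ −(k²/2)[T_f^{(k)},T_g^{(k)},T_h^{(k)},T_t^{(k)}] − T_{{f,g,h,t}}^{(k)}‖ = O(1/k) as k→∞. -/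

import Mathlib

open Filter Asymptotics

/-- The Nambu generalized commutator. -/
noncomputable def nambu {R : Type*} [Ring R] {n : ℕ} (A : Fin n → R) : R :=
  ∑ σ : Equiv.Perm (Fin n), (Equiv.Perm.sign σ : ℤ) • (List.ofFn fun i => A (σ i)).prod

private def e24 : Fin 24 → Equiv.Perm (Fin 4) :=
![1,
 Equiv.swap (2:Fin 4) 3,
 Equiv.swap (1:Fin 4) 2,
 Equiv.swap (1:Fin 4) 2 * Equiv.swap (2:Fin 4) 3,
 Equiv.swap (1:Fin 4) 3 * Equiv.swap (3:Fin 4) 2,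
 Equiv.swap (1:Fin 4) 3,
 Equiv.swap (0:Fin 4) 1,
 Equiv.swap (0:Fin 4) 1 * Equiv.swap (2:Fin 4) 3,
 Equiv.swap (0:Fin 4) 1 * Equiv.swap (1:Fin 4) 2,
 Equiv.swap (0:Fin 4) 1 * Equiv.swap (1:Fin 4) 2 * Equiv.swap (2:Fin 4) 3,
 Equiv.swap (0:Fin 4) 1 * Equiv.swap (1:Fin 4) 3 * Equiv.swap (3:Fin 4) 2,
 Equiv.swap (0:Fin 4) 1 * Equiv.swap (1:Fin 4) 3,
 Equiv.swap (0:Fin 4) 2 * Equiv.swap (2:Fin 4) 1,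
 Equiv.swap (0:Fin 4) 2 * Equiv.swap (2:Fin 4) 3 * Equiv.swap (3:Fin 4) 1,
 Equiv.swap (0:Fin 4) 2,
 Equiv.swap (0:Fin 4) 2 * Equiv.swap (2:Fin 4) 3,
 Equiv.swap (0:Fin 4) 2 * Equiv.swap (1:Fin 4) 3,
 Equiv.swap (0:Fin 4) 2 * Equiv.swap (2:Fin 4) 1 * Equiv.swap (1:Fin 4) 3,
 Equiv.swap (0:Fin 4) 3 * Equiv.swap (3:Fin 4) 2 * Equiv.swap (2:Fin 4) 1,
 Equiv.swap (0:Fin 4) 3 * Equiv.swap (3:Fin 4) 1,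
 Equiv.swap (0:Fin 4) 3 * Equiv.swap (3:Fin 4) 2,
 Equiv.swap (0:Fin 4) 3,
 Equiv.swap (0:Fin 4) 3 * Equiv.swap (3:Fin 4) 1 * Equiv.swap (1:Fin 4) 2,
 Equiv.swap (0:Fin 4) 3 * Equiv.swap (1:Fin 4) 2]

private lemma nambu_four {R : Type*} [Ring R] (A B C D : R) :
    nambu ![A, B, C, D] =
      (A*B - B*A)*(C*D - D*C) - (A*C - C*A)*(B*D - D*B) + (A*D - D*A)*(B*C - C*B)
      + (C*D - D*C)*(A*B - B*A) - (B*D - D*B)*(A*C - C*A) + (B*C - C*B)*(A*D - D*A) := by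
  rw [nambu, ← Fintype.sum_bijective e24 (by decide) _ _ (fun i => rfl)]
  simp +decide [Fin.sum_univ_succ, e24, List.ofFn_succ, Equiv.swap_apply_def,
    show (Fin.succ 2 : Fin 4) = 3 from rfl, Matrix.cons_val_zero, Matrix.cons_val_one,
    Matrix.head_cons]
  noncomm_ring

private lemma comb {u v w : ℕ → ℝ} (hle : ∀ k, |u k| ≤ v k) (hv : v =O[atTop] w) :
    u =O[atTop] w := by
  obtain ⟨C, hC⟩ := isBigO_iff.mp hv
  rw [isBigO_iff]
  refine ⟨C, ?_⟩
  filter_upwards [hC] with k h2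
  calc ‖u k‖ = |u k| := Real.norm_eq_abs _
    _ ≤ v k := hle k
    _ ≤ |v k| := le_abs_self _
    _ = ‖v k‖ := (Real.norm_eq_abs _).symm
    _ ≤ C * ‖w k‖ := h2

private lemma six {E : Type*} [SeminormedAddCommGroup E] [NormedSpace ℂ E]
    (a b c d e f : E) :
    ‖(2⁻¹:ℂ) • (a + b - c - d + e + f)‖
      ≤ ‖(2⁻¹:ℂ)‖ * (‖a‖ + ‖b‖ + ‖c‖ + ‖d‖ + ‖e‖ + ‖f‖) := by
  refine (norm_smul_le _ _).trans (mul_le_mul_of_nonneg_left ?_ (norm_nonneg _))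
  have t5 := norm_add_le (a + b - c - d + e) f
  have t4 := norm_add_le (a + b - c - d) e
  have t3 := norm_sub_le (a + b - c) d
  have t2 := norm_sub_le (a + b) c
  have t1 := norm_add_le a b
  linarith


/-- Proposition `4functions`, abstract form: for quantization maps `T k`
satisfying `‖ik[T_f,T_g] − T_{{f,g}}‖ = O(1/k)`, `‖T_f‖ ≤ |f|_∞`, and
`‖T_f T_g − T_{fg}‖ = O(1/k)`, with `{f,g,h,t} = {f,g}{h,t} − {f,h}{g,t} + {f,t}{g,h}`,
one has `‖−(k²/2)[T_f,T_g,T_h,T_t] − T_{{f,g,h,t}}‖ = O(1/k)` as `k → ∞`. -/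
theorem stmt13 {F : Type*} [CommRing F] [Algebra ℂ F]
    (H : ℕ → Type*) [∀ k, NormedRing (H k)] [∀ k, NormedAlgebra ℂ (H k)]
    (T : ∀ k, F →ₗ[ℂ] H k)
    (bracket : F → F → F) (supNorm : F → ℝ)
    (h₁ : ∀ f g : F,
      (fun k : ℕ => ‖(Complex.I * k) • (T k f * T k g - T k g * T k f) - T k (bracket f g)‖)
        =O[atTop] fun k : ℕ => (1 : ℝ) / k)
    (h₂ : ∀ (f : F) (k : ℕ), ‖T k f‖ ≤ supNorm f)
    (h₃ : ∀ f g : F,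
      (fun k : ℕ => ‖T k f * T k g - T k (f * g)‖) =O[atTop] fun k : ℕ => (1 : ℝ) / k)
    (f g h t : F) :
    (fun k : ℕ =>
        ‖(-((k : ℂ) ^ 2) / 2) • nambu ![T k f, T k g, T k h, T k t] -
          T k (bracket f g * bracket h t - bracket f h * bracket g t +
            bracket f t * bracket g h)‖)
      =O[atTop] fun k : ℕ => (1 : ℝ) / k := by
  have key : ∀ a b c d : F,
      (fun k : ℕ =>
        ‖((Complex.I * k) • (T k a * T k b - T k b * T k a)) *
            ((Complex.I * k) • (T k c * T k d - T k d * T k c)) -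
          T k (bracket a b * bracket c d)‖) =O[atTop] fun k : ℕ => (1 : ℝ) / k := by
    intro a b c d
    obtain ⟨C1, hC1⟩ := isBigO_iff.mp (h₁ a b)
    obtain ⟨C2, hC2⟩ := isBigO_iff.mp (h₁ c d)
    obtain ⟨C3, hC3⟩ := isBigO_iff.mp (h₃ (bracket a b) (bracket c d))
    rw [isBigO_iff]
    refine ⟨|C1| * supNorm (bracket c d) + |C1| * |C2| + supNorm (bracket a b) * |C2| + |C3|,
      ?_⟩
    filter_upwards [hC1, hC2, hC3, eventually_ge_atTop 1] with k e1 e2 e3 hk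
    have hk0 : (0:ℝ) ≤ 1 / (k:ℝ) := by positivity
    have hkn : ‖(1:ℝ) / (k:ℝ)‖ = 1 / (k:ℝ) := by rw [Real.norm_eq_abs, abs_of_nonneg hk0]
    have hk1 : (1:ℝ) / (k:ℝ) ≤ 1 := by
      have h1k : (1:ℝ) ≤ (k:ℝ) := by exact_mod_cast hk
      rw [div_le_one (by linarith)]; exact h1k
    rw [norm_norm, hkn] at e1 e2 e3 ⊢
    set X1 := (Complex.I * (k:ℂ)) • (T k a * T k b - T k b * T k a) with hX1
    set X2 := (Complex.I * (k:ℂ)) • (T k c * T k d - T k d * T k c) with hX2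
    set P := T k (bracket a b) with hP
    set Q := T k (bracket c d) with hQ
    have b1 : ‖X1 - P‖ ≤ |C1| * (1/(k:ℝ)) :=
      e1.trans (mul_le_mul_of_nonneg_right (le_abs_self _) hk0)
    have b2 : ‖X2 - Q‖ ≤ |C2| * (1/(k:ℝ)) :=
      e2.trans (mul_le_mul_of_nonneg_right (le_abs_self _) hk0)
    have b3 : ‖P * Q - T k (bracket a b * bracket c d)‖ ≤ |C3| * (1/(k:ℝ)) :=
      e3.trans (mul_le_mul_of_nonneg_right (le_abs_self _) hk0)
    have hsP : ‖P‖ ≤ supNorm (bracket a b) := h₂ _ k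
    have hsQ : ‖Q‖ ≤ supNorm (bracket c d) := h₂ _ k
    have s0 : 0 ≤ supNorm (bracket c d) := (norm_nonneg _).trans hsQ
    have s0' : 0 ≤ supNorm (bracket a b) := (norm_nonneg _).trans hsP
    have hX2n : ‖X2‖ ≤ supNorm (bracket c d) + |C2| * (1/(k:ℝ)) := by
      have hQX : Q + (X2 - Q) = X2 := by abel
      calc ‖X2‖ = ‖Q + (X2 - Q)‖ := by rw [hQX]
        _ ≤ ‖Q‖ + ‖X2 - Q‖ := norm_add_le _ _
        _ ≤ _ := add_le_add hsQ b2
    have hdec : X1 * X2 - T k (bracket a b * bracket c d)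
        = ((X1 - P) * X2 + P * (X2 - Q)) + (P * Q - T k (bracket a b * bracket c d)) := by
      noncomm_ring
    have m1 : ‖X1 - P‖ * ‖X2‖ ≤ (|C1| * (1/(k:ℝ))) * (supNorm (bracket c d) + |C2| * (1/(k:ℝ))) :=
      mul_le_mul b1 hX2n (norm_nonneg _) (by positivity)
    have m2 : ‖P‖ * ‖X2 - Q‖ ≤ supNorm (bracket a b) * (|C2| * (1/(k:ℝ))) :=
      mul_le_mul hsP b2 (norm_nonneg _) s0'
    have m3 : (1/(k:ℝ)) * (1/(k:ℝ)) ≤ (1/(k:ℝ)) := by nlinarith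
    calc ‖X1 * X2 - T k (bracket a b * bracket c d)‖
        ≤ ‖(X1 - P) * X2 + P * (X2 - Q)‖ + ‖P * Q - T k (bracket a b * bracket c d)‖ := by
          rw [hdec]; exact norm_add_le _ _
      _ ≤ (‖X1 - P‖ * ‖X2‖ + ‖P‖ * ‖X2 - Q‖) + ‖P * Q - T k (bracket a b * bracket c d)‖ :=
          add_le_add ((norm_add_le _ _).trans
            (add_le_add (norm_mul_le _ _) (norm_mul_le _ _))) le_rfl
      _ ≤ (|C1| * supNorm (bracket c d) + |C1| * |C2| + supNorm (bracket a b) * |C2| + |C3|)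
            * (1/(k:ℝ)) := by
          have m4 : |C1| * |C2| * ((1/(k:ℝ)) * (1/(k:ℝ))) ≤ |C1| * |C2| * (1/(k:ℝ)) :=
            mul_le_mul_of_nonneg_left m3 (mul_nonneg (abs_nonneg C1) (abs_nonneg C2))
          nlinarith [abs_nonneg C1, abs_nonneg C2, abs_nonneg C3, m3, hk0, m1, m2, b3, m4]
  have hId : ∀ k : ℕ,
      (-((k : ℂ) ^ 2) / 2) • nambu ![T k f, T k g, T k h, T k t] -
        T k (bracket f g * bracket h t - bracket f h * bracket g t + bracket f t * bracket g h)
      = (2⁻¹ : ℂ) • (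
        (((Complex.I * k) • (T k f * T k g - T k g * T k f)) *
            ((Complex.I * k) • (T k h * T k t - T k t * T k h)) -
          T k (bracket f g * bracket h t)) +
        (((Complex.I * k) • (T k h * T k t - T k t * T k h)) *
            ((Complex.I * k) • (T k f * T k g - T k g * T k f)) -
          T k (bracket h t * bracket f g)) -
        (((Complex.I * k) • (T k f * T k h - T k h * T k f)) *
            ((Complex.I * k) • (T k g * T k t - T k t * T k g)) -
          T k (bracket f h * bracket g t)) -
        (((Complex.I * k) • (T k g * T k t - T k t * T k g)) *
            ((Complex.I * k) • (T k f * T k h - T k h * T k f)) -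
          T k (bracket g t * bracket f h)) +
        (((Complex.I * k) • (T k f * T k t - T k t * T k f)) *
            ((Complex.I * k) • (T k g * T k h - T k h * T k g)) -
          T k (bracket f t * bracket g h)) +
        (((Complex.I * k) • (T k g * T k h - T k h * T k g)) *
            ((Complex.I * k) • (T k f * T k t - T k t * T k f)) -
          T k (bracket g h * bracket f t))) := by
    intro k
    have hsq : ∀ u v : H k, ((Complex.I * (k:ℂ)) • u) * ((Complex.I * (k:ℂ)) • v)
        = (-((k:ℂ)^2)) • (u * v) := by
      intro u v
      rw [smul_mul_smul_comm]
      congr 1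
      linear_combination (k:ℂ)^2 * Complex.I_sq
    rw [nambu_four, map_add (T k), map_sub (T k)]
    rw [hsq, hsq, hsq, hsq, hsq, hsq]
    rw [mul_comm (bracket h t) (bracket f g), mul_comm (bracket g t) (bracket f h),
        mul_comm (bracket g h) (bracket f t)]
    module
  have hv := (((((((key f g h t).add (key h t f g)).add (key f h g t)).add
      (key g t f h)).add (key f t g h)).add (key g h f t)).const_mul_left ‖(2⁻¹:ℂ)‖)
  refine comb ?_ hv
  intro k
  rw [abs_of_nonneg (norm_nonneg _), hId k]
  exact six _ _ _ _ _ _
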